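/- Let V be a real vector space of dimension 2n (n ≥ 1) and let p be an integer with 0 < p < n. Suppose ω is an element of the 2p-th exterior power Λ^{2p} V such that (Λ^{2p} ρ_I(θ))(ω) = ω for every complex structure I on V and every θ ∈ ℝ, where Λ^{2p} ρ_I(θ) denotes the induced map on Λ^{2p} V (acting by A(v₁ ∧ … ∧ v_{2p}) = A v₁ ∧ … ∧ A v_{2p}). Then ω = 0. -/

import Mathlib

set_option linter.unusedSectionVars false
set_option maxHeartbeats 1000000

open ExteriorAlgebra
open Module

section Aux

variable {ι : Type*} [Fintype ι] [DecidableEq ι]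
variable {V : Type*} [AddCommGroup V] [Module ℝ V]

/-- an enumeration of a finset of card `k` by `Fin k`. -/
noncomputable def enumOf (S : Finset ι) {k : ℕ} (h : S.card = k) : Fin k → ι :=
  fun i => (S.equivFin.symm (Fin.cast h.symm i) : ι)

lemma enumOf_mem (S : Finset ι) {k : ℕ} (h : S.card = k) (i : Fin k) :
    enumOf S h i ∈ S := (S.equivFin.symm _).2

lemma enumOf_inj (S : Finset ι) {k : ℕ} (h : S.card = k) :
    Function.Injective (enumOf S h) := by
  intro i j hij
  have := S.equivFin.symm.injective (Subtype.ext hij)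
  simpa [Fin.ext_iff] using congrArg Fin.val this

lemma enumOf_surj (S : Finset ι) {k : ℕ} (h : S.card = k) {x : ι} (hx : x ∈ S) :
    ∃ i, enumOf S h i = x := by
  refine ⟨Fin.cast h (S.equivFin ⟨x, hx⟩), ?_⟩
  have : Fin.cast h.symm (Fin.cast h (S.equivFin ⟨x, hx⟩)) = S.equivFin ⟨x, hx⟩ := by
    ext; simp
  rw [enumOf, this, Equiv.symm_apply_apply]

/-- the "dual" alternating form extracting the coefficient of the monomial indexed by `S`. -/
noncomputable def altF (b : Basis ι ℝ V) (S : Finset ι) {k : ℕ} (h : S.card = k) :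
    V [⋀^Fin k]→ₗ[ℝ] ℝ :=
  (Matrix.detRowAlternating :
    (Fin k → ℝ) [⋀^Fin k]→ₗ[ℝ] ℝ).compLinearMap (LinearMap.pi fun i => b.coord (enumOf S h i))

lemma altF_apply (b : Basis ι ℝ V) (S : Finset ι) {k : ℕ} (h : S.card = k) (v : Fin k → V) :
    altF b S h v = Matrix.det (Matrix.of fun j i => b.repr (v j) (enumOf S h i)) := rfl

noncomputable def phiF (b : Basis ι ℝ V) (S : Finset ι) {k : ℕ} (h : S.card = k) :
    ExteriorAlgebra ℝ V →ₗ[ℝ] ℝ :=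
  ExteriorAlgebra.liftAlternating
    (Function.update (fun i => (0 : V [⋀^Fin i]→ₗ[ℝ] ℝ)) k (altF b S h))

lemma phiF_ιMulti (b : Basis ι ℝ V) (S : Finset ι) {k : ℕ} (h : S.card = k) (v : Fin k → V) :
    phiF b S h (ιMulti ℝ k v) = altF b S h v := by
  rw [phiF, liftAlternating_apply_ιMulti, Function.update_self]

lemma phiF_monomial_self (b : Basis ι ℝ V) (T : Finset ι) {k : ℕ} (h : T.card = k) :
    phiF b T h (ιMulti ℝ k (b ∘ enumOf T h)) = 1 := by
  rw [phiF_ιMulti, altF_apply]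
  have : (Matrix.of fun j i => (b.repr ((b ∘ enumOf T h) j)) (enumOf T h i))
      = (1 : Matrix (Fin k) (Fin k) ℝ) := by
    ext j i
    simp only [Matrix.of_apply, Function.comp_apply, Basis.repr_self, Finsupp.single_apply,
      Matrix.one_apply, (enumOf_inj T h).eq_iff]
  rw [this, Matrix.det_one]

lemma phiF_monomial_ne (b : Basis ι ℝ V) (S T : Finset ι) {k : ℕ} (hS : S.card = k)
    (hT : T.card = k) (hne : S ≠ T) :
    phiF b S hS (ιMulti ℝ k (b ∘ enumOf T hT)) = 0 := by
  rw [phiF_ιMulti, altF_apply]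
  obtain ⟨x, hxT, hxS⟩ : ∃ x ∈ T, x ∉ S := by
    by_contra hc
    push_neg at hc
    exact hne (Finset.eq_of_subset_of_card_le hc (by omega)).symm
  obtain ⟨j, hj⟩ := enumOf_surj T hT hxT
  apply Matrix.det_eq_zero_of_row_eq_zero j
  intro i
  simp only [Matrix.of_apply, Function.comp_apply, hj, Basis.repr_self, Finsupp.single_apply]
  rw [if_neg]
  rintro rfl
  exact hxS (enumOf_mem S hS i)

lemma diag_repr (b : Basis ι ℝ V) (d : ι → ℝ) (u : V) (x : ι) :
    b.repr ((b.constr ℝ fun y => d y • b y) u) x = d x * b.repr u x := by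
  conv_lhs => rw [← b.sum_repr u]
  rw [map_sum, map_sum]
  simp only [map_smul, Basis.constr_basis, Basis.repr_self, Finsupp.smul_single]
  rw [Finset.sum_apply']
  simp only [Finsupp.single_apply, smul_eq_mul]
  rw [Finset.sum_ite_eq' Finset.univ x]
  simp [mul_comm, mul_left_comm]

lemma altF_diag (b : Basis ι ℝ V) (S : Finset ι) {k : ℕ} (h : S.card = k) (d : ι → ℝ)
    (v : Fin k → V) :
    (Matrix.det (Matrix.of fun j i =>
        b.repr ((b.constr ℝ fun y => d y • b y) (v j)) (enumOf S h i)))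
      = (∏ x ∈ S, d x) * Matrix.det (Matrix.of fun j i => b.repr (v j) (enumOf S h i)) := by
  have h1 : (Matrix.of fun j i => b.repr ((b.constr ℝ fun y => d y • b y) (v j)) (enumOf S h i))
      = Matrix.of fun j i => (fun i => d (enumOf S h i)) i *
          (Matrix.of fun j i => b.repr (v j) (enumOf S h i)) j i := by
    ext j i
    simp only [Matrix.of_apply]
    exact diag_repr b d (v j) (enumOf S h i)
  rw [h1, Matrix.det_mul_row]
  congr 1
  rw [← Finset.prod_coe_sort S (fun x => d x),
    ← Equiv.prod_comp ((finCongr h.symm).trans S.equivFin.symm) (fun x : {x // x ∈ S} => d x)]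
  exact Finset.prod_congr rfl fun i _ => by simp [enumOf, finCongr]

lemma span_monomials (b : Basis ι ℝ V) (k : ℕ) :
    ⋀[ℝ]^k V ≤ Submodule.span ℝ (Set.range fun T : {T : Finset ι // T.card = k} =>
      ExteriorAlgebra.ιMulti ℝ k (b ∘ enumOf T.1 T.2)) := by
  rw [← ExteriorAlgebra.ιMulti_span_fixedDegree]
  rw [Submodule.span_le]
  rintro _ ⟨v, rfl⟩
  have hv : (ιMulti ℝ k v : ExteriorAlgebra ℝ V) =
      ∑ r : Fin k → ι, (∏ j, b.repr (v j) (r j)) •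
        ιMulti ℝ k (fun j => b (r j)) := by
    have expand : v = fun j => ∑ x : ι, b.repr (v j) x • b x := by
      funext j; rw [Basis.sum_repr]
    conv_lhs => rw [expand]
    rw [show (ιMulti ℝ k (M := V)) (fun j => ∑ x : ι, b.repr (v j) x • b x)
        = (ιMulti ℝ k (M := V)).toMultilinearMap (fun j => ∑ x : ι, b.repr (v j) x • b x) from rfl,
      MultilinearMap.map_sum]
    refine Finset.sum_congr rfl fun r _ => ?_
    rw [MultilinearMap.map_smul_univ]
    rfl
  rw [hv]
  apply Submodule.sum_mem
  intro r _
  apply Submodule.smul_mem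
  by_cases hr : Function.Injective r
  · set T : Finset ι := Finset.univ.image r with hT
    have hTcard : T.card = k := by
      rw [hT, Finset.card_image_of_injective _ hr, Finset.card_univ, Fintype.card_fin]
    have hmem : ∀ j, r j ∈ T := fun j => Finset.mem_image_of_mem r (Finset.mem_univ j)
    let σ : Fin k → Fin k := fun i => Fin.cast hTcard (T.equivFin ⟨r i, hmem i⟩)
    have hσ : ∀ i, enumOf T hTcard (σ i) = r i := by
      intro i
      show (T.equivFin.symm (Fin.cast hTcard.symm
        (Fin.cast hTcard (T.equivFin ⟨r i, hmem i⟩))) : ι) = r i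
      have : Fin.cast hTcard.symm (Fin.cast hTcard (T.equivFin ⟨r i, hmem i⟩))
          = T.equivFin ⟨r i, hmem i⟩ := by ext; simp
      rw [this, Equiv.symm_apply_apply]
    have hσinj : Function.Injective σ := by
      intro i j hij
      have : (⟨r i, hmem i⟩ : {x // x ∈ T}) = ⟨r j, hmem j⟩ :=
        T.equivFin.injective (Fin.ext (by have hv := congrArg Fin.val hij; exact hv))
      exact hr (Subtype.ext_iff.mp this)
    let π : Equiv.Perm (Fin k) := Equiv.ofBijective σ (Finite.injective_iff_bijective.mp hσinj)
    have hcomp : (fun j => b (r j)) = (b ∘ enumOf T hTcard) ∘ π := by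
      funext j
      simp only [Function.comp_apply]
      rw [show (π j : Fin k) = σ j from rfl, hσ]
    rw [hcomp]
    rw [AlternatingMap.map_perm]
    apply Submodule.smul_mem
    exact Submodule.subset_span ⟨⟨T, hTcard⟩, rfl⟩
  · rw [Function.not_injective_iff] at hr
    obtain ⟨i, j, hij, hne⟩ := hr
    rw [AlternatingMap.map_eq_zero_of_eq _ _ (by rw [hij]) hne]
    exact Submodule.zero_mem _

lemma phiF_map_diag (b : Basis ι ℝ V) (S : Finset ι) {k : ℕ} (h : S.card = k) (d : ι → ℝ)
    (ω : ExteriorAlgebra ℝ V) (hω : ω ∈ Submodule.span ℝ (Set.range (ιMulti ℝ k (M := V)))) :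
    phiF b S h (ExteriorAlgebra.map (b.constr ℝ fun y => d y • b y) ω)
      = (∏ x ∈ S, d x) * phiF b S h ω := by
  induction hω using Submodule.span_induction with
  | mem x hx =>
    obtain ⟨v, rfl⟩ := hx
    rw [ExteriorAlgebra.map_apply_ιMulti, phiF_ιMulti, phiF_ιMulti, altF_apply, altF_apply]
    exact altF_diag b S h d v
  | zero => simp
  | add x y _ _ hx hy => rw [map_add, map_add, map_add, hx, hy]; ring
  | smul a x _ hx => rw [map_smul, map_smul, map_smul, hx, smul_eq_mul, smul_eq_mul]; ring

lemma inv_diag (b : Basis ι ℝ V) (ω : ExteriorAlgebra ℝ V)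
    (hinv : ∀ (I : Module.End ℝ V) (θ : ℝ), I ∘ₗ I = -LinearMap.id →
      ExteriorAlgebra.map (Real.cos θ • LinearMap.id + Real.sin θ • I) ω = ω)
    (τ : ι → ι) (hτ : ∀ x, τ (τ x) = x) (c c' : ι → ℝ)
    (hc : ∀ x, c x * c (τ x) = -1) (hc' : ∀ x, c' x * c' (τ x) = -1) :
    ExteriorAlgebra.map (b.constr ℝ fun x => (-(c x * c' (τ x))) • b x) ω = ω := by
  set I : Module.End ℝ V := b.constr ℝ fun x => c x • b (τ x) with hIdef
  set I' : Module.End ℝ V := b.constr ℝ fun x => c' x • b (τ x) with hI'def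
  have hI : I ∘ₗ I = -LinearMap.id := by
    apply b.ext; intro x
    simp only [LinearMap.comp_apply, hIdef, Basis.constr_basis, map_smul, smul_smul, hτ x,
      LinearMap.neg_apply, LinearMap.id_apply]
    rw [hc x]; simp
  have hI' : I' ∘ₗ I' = -LinearMap.id := by
    apply b.ext; intro x
    simp only [LinearMap.comp_apply, hI'def, Basis.constr_basis, map_smul, smul_smul, hτ x,
      LinearMap.neg_apply, LinearMap.id_apply]
    rw [hc' x]; simp
  have h1 := hinv I (-(Real.pi/2)) hI
  have h2 := hinv I' (Real.pi/2) hI'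
  set A : Module.End ℝ V :=
    Real.cos (-(Real.pi/2)) • LinearMap.id + Real.sin (-(Real.pi/2)) • I with hA
  set B : Module.End ℝ V :=
    Real.cos (Real.pi/2) • LinearMap.id + Real.sin (Real.pi/2) • I' with hB
  have hBA : (b.constr ℝ fun x => (-(c x * c' (τ x))) • b x) = B ∘ₗ A := by
    apply b.ext; intro x
    simp only [LinearMap.comp_apply, hA, hB, hIdef, hI'def, Real.cos_pi_div_two,
      Real.sin_pi_div_two, Real.cos_neg, Real.sin_neg, LinearMap.add_apply, LinearMap.smul_apply,
      LinearMap.id_apply, Basis.constr_basis, zero_smul, one_smul, zero_add, map_neg, map_smul,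
      smul_smul, hτ x, neg_smul, smul_neg, LinearMap.neg_apply]
  rw [hBA, ← ExteriorAlgebra.map_comp_map, AlgHom.comp_apply, h1, h2]

lemma exists_edge {n : ℕ} (T : Finset (Fin n × Bool)) (hT1 : T.Nonempty)
    (hT2 : T ≠ Finset.univ) :
    ∃ (a bb : Fin n × Bool) (τ : Fin n × Bool → Fin n × Bool) (s : Fin n × Bool → ℝ),
      (∀ x, τ (τ x) = x) ∧ τ a = bb ∧ (∀ x, s x * s (τ x) = -1) ∧ a ∈ T ∧ bb ∉ T := by
  obtain ⟨⟨k, β⟩, haT⟩ := hT1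
  obtain ⟨⟨l, γ⟩, hbT⟩ : ∃ x, x ∉ T := by
    by_contra hc; push_neg at hc
    exact hT2 (Finset.eq_univ_of_forall hc)
  set τp : Fin n × Bool → Fin n × Bool := fun x => (x.1, !x.2) with hτp
  have hτp2 : ∀ x, τp (τp x) = x := fun x => by simp [hτp]
  set sp : Fin n × Bool → ℝ := fun x => if x.2 then 1 else -1 with hsp
  have hsp2 : ∀ x, sp x * sp (τp x) = -1 := by
    rintro ⟨m, δ⟩; cases δ <;> simp [hsp, hτp]
  have cross : ∀ (k l : Fin n), k ≠ l →
      ∃ (τ : Fin n × Bool → Fin n × Bool) (s : Fin n × Bool → ℝ),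
        (∀ x, τ (τ x) = x) ∧ (∀ δ, τ (k, δ) = (l, δ)) ∧ (∀ x, s x * s (τ x) = -1) := by
    intro k l hkl
    refine ⟨fun x => if x.1 = k then (l, x.2) else if x.1 = l then (k, x.2) else (x.1, !x.2),
      fun x => if x.1 = k then 1 else if x.1 = l then -1 else if x.2 then 1 else -1, ?_, ?_, ?_⟩
    · rintro ⟨m, δ⟩
      by_cases h1 : m = k
      · simp [h1, hkl.symm, hkl]
      · by_cases h2 : m = l
        · simp [h1, h2, hkl, hkl.symm]
        · simp [h1, h2]
    · intro δ; simp [hkl]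
    · rintro ⟨m, δ⟩
      by_cases h1 : m = k
      · simp [h1, hkl.symm, hkl]
      · by_cases h2 : m = l
        · simp [h1, h2, hkl, hkl.symm]
        · cases δ <;> simp [h1, h2]
  by_cases hkl : k = l
  · subst hkl
    have hβγ : γ = !β := by
      by_contra h
      have : γ = β := by cases β <;> cases γ <;> simp_all
      exact hbT (this ▸ haT)
    exact ⟨(k, β), (k, γ), τp, sp, hτp2, by simp [hτp, hβγ], hsp2, haT, hbT⟩
  · by_cases hβγ : β = γ
    · obtain ⟨τ, s, h1, h2, h3⟩ := cross k l hkl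
      exact ⟨(k, β), (l, γ), τ, s, h1, by rw [h2 β, hβγ], h3, haT, hbT⟩
    · have hγ : γ = !β := by cases β <;> cases γ <;> simp_all
      by_cases hmid : (l, β) ∈ T
      · exact ⟨(l, β), (l, γ), τp, sp, hτp2, by simp [hτp, hγ], hsp2, hmid, hbT⟩
      · obtain ⟨τ, s, h1, h2, h3⟩ := cross k l hkl
        exact ⟨(k, β), (l, β), τ, s, h1, h2 β, h3, haT, hmid⟩

end Aux

/-- an element of the `2p`-th exterior power of a `2n`-dimensional real
vector space (`0 < p < n`) invariant under all induced maps `Λ^{2p} ρ_I(θ)`, where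
`ρ_I(θ) = cos θ · id + sin θ · I` and `I` ranges over complex structures on `V`, is zero.
Here the induced action on the exterior power is the restriction of the functorial algebra
map `ExteriorAlgebra.map`, which acts by `v₁ ∧ … ∧ v_{2p} ↦ A v₁ ∧ … ∧ A v_{2p}`. -/
theorem stmt4 (n p : ℕ) (hn : 1 ≤ n) (hp : 0 < p) (hpn : p < n) (V : Type*)
    [AddCommGroup V] [Module ℝ V] [FiniteDimensional ℝ V]
    (hdim : Module.finrank ℝ V = 2 * n)
    (ω : ExteriorAlgebra ℝ V) (hω : ω ∈ ⋀[ℝ]^(2 * p) V)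
    (hinv : ∀ (I : Module.End ℝ V) (θ : ℝ), I ∘ₗ I = -LinearMap.id →
      ExteriorAlgebra.map (Real.cos θ • LinearMap.id + Real.sin θ • I) ω = ω) :
    ω = 0 := by
  classical
  have hcard : Fintype.card (Fin n × Bool) = 2 * n := by
    simp [Fintype.card_prod, mul_comm]
  let e : Fin (Module.finrank ℝ V) ≃ (Fin n × Bool) :=
    (finCongr (by rw [hdim, two_mul, ← Nat.mul_two] : Module.finrank ℝ V = n * 2)).trans
      (finProdFinEquiv.symm.trans ((Equiv.refl (Fin n)).prodCongr finTwoEquiv))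
  let b : Basis (Fin n × Bool) ℝ V := (Module.finBasis ℝ V).reindex e
  have hspan := span_monomials b (2 * p) hω
  rw [Submodule.mem_span_range_iff_exists_fun] at hspan
  obtain ⟨cc, hcc⟩ := hspan
  suffices hzero : ∀ T : {T : Finset (Fin n × Bool) // T.card = 2 * p}, cc T = 0 by
    rw [← hcc]
    simp [hzero]
  intro T
  have hphi : phiF b T.1 T.2 ω = cc T := by
    rw [← hcc, map_sum]
    rw [Finset.sum_eq_single T]
    · rw [map_smul, phiF_monomial_self, smul_eq_mul, mul_one]
    · intro T' _ hne
      rw [map_smul, phiF_monomial_ne b T.1 T'.1 T.2 T'.2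
        (fun h => hne (Subtype.ext h.symm)), smul_zero]
    · intro h; exact absurd (Finset.mem_univ T) h
  have hT1 : T.1.Nonempty := Finset.card_pos.mp (by rw [T.2]; omega)
  have hT2 : T.1 ≠ Finset.univ := by
    intro h
    have := T.2
    rw [h, Finset.card_univ, hcard] at this
    omega
  obtain ⟨a, bb, τ, s, hτ2, hab, hs, haT, hbT⟩ := exists_edge T.1 hT1 hT2
  have haneb : a ≠ bb := fun h => hbT (h ▸ haT)
  have hba : τ bb = a := by rw [← hab, hτ2]
  have htaune : ∀ x, x ≠ a → x ≠ bb → τ x ≠ a ∧ τ x ≠ bb := by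
    intro x hxa hxb
    constructor
    · intro h; apply hxb; rw [← hτ2 x, h, hab]
    · intro h; apply hxa; rw [← hτ2 x, h, hba]
  set f : Fin n × Bool → ℝ := fun x => if x = a then 2 else if x = bb then 2⁻¹ else 1 with hf
  set f' : Fin n × Bool → ℝ := fun x => if x = a then 2⁻¹ else if x = bb then 2 else 1 with hf'
  set c : Fin n × Bool → ℝ := fun x => f x * s x with hcdef
  set c' : Fin n × Bool → ℝ := fun x => f' x * s x with hc'def
  have hfτ : ∀ x, f x * f (τ x) = 1 := by
    intro x
    by_cases hxa : x = a
    · subst hxa; rw [hf]; simp [hab, haneb, haneb.symm]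
    · by_cases hxb : x = bb
      · subst hxb; rw [hf]; simp [hba, haneb, haneb.symm] <;> norm_num
      · obtain ⟨h1, h2⟩ := htaune x hxa hxb
        rw [hf]; simp [hxa, hxb, h1, h2]
  have hf'τ : ∀ x, f' x * f' (τ x) = 1 := by
    intro x
    by_cases hxa : x = a
    · subst hxa; rw [hf']; simp [hab, haneb, haneb.symm] <;> norm_num
    · by_cases hxb : x = bb
      · subst hxb; rw [hf']; simp [hba, haneb, haneb.symm] <;> norm_num
      · obtain ⟨h1, h2⟩ := htaune x hxa hxb
        rw [hf']; simp [hxa, hxb, h1, h2]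
  have hc : ∀ x, c x * c (τ x) = -1 := by
    intro x
    rw [hcdef]
    have : f x * s x * (f (τ x) * s (τ x)) = (f x * f (τ x)) * (s x * s (τ x)) := by ring
    rw [this, hfτ x, hs x, one_mul]
  have hc' : ∀ x, c' x * c' (τ x) = -1 := by
    intro x
    rw [hc'def]
    have : f' x * s x * (f' (τ x) * s (τ x)) = (f' x * f' (τ x)) * (s x * s (τ x)) := by ring
    rw [this, hf'τ x, hs x, one_mul]
  set d : Fin n × Bool → ℝ := fun x => if x = a then 4 else if x = bb then 4⁻¹ else 1 with hd
  have hdc : ∀ x, -(c x * c' (τ x)) = d x := by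
    intro x
    have hsx : s x * s (τ x) = -1 := hs x
    have expand : -(c x * c' (τ x)) = (f x * f' (τ x)) * (-(s x * s (τ x))) := by
      rw [hcdef, hc'def]; ring
    rw [expand, hsx, neg_neg, mul_one]
    by_cases hxa : x = a
    · subst hxa; rw [hf, hf', hd]; simp [hab, haneb, haneb.symm] <;> norm_num
    · by_cases hxb : x = bb
      · subst hxb; rw [hf, hf', hd]; simp [hba, haneb, haneb.symm] <;> norm_num
      · obtain ⟨h1, h2⟩ := htaune x hxa hxb
        rw [hf, hf', hd]; simp [hxa, hxb, h1, h2]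
  have hDinv := inv_diag b ω hinv τ hτ2 c c' hc hc'
  have hDd : (b.constr ℝ fun x => (-(c x * c' (τ x))) • b x)
      = b.constr ℝ fun x => d x • b x := by
    congr 1
    funext x
    rw [hdc x]
  rw [hDd] at hDinv
  have hscale := phiF_map_diag b T.1 T.2 d ω
    (by rw [ExteriorAlgebra.ιMulti_span_fixedDegree]; exact hω)
  rw [hDinv] at hscale
  have hprod : (∏ x ∈ T.1, d x) = 4 := by
    rw [Finset.prod_eq_single_of_mem a haT]
    · rw [hd]; simp
    · intro x hxT hxa
      have hxb : x ≠ bb := fun h => hbT (h ▸ hxT)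
      rw [hd]; simp [hxa, hxb]
  rw [hprod] at hscale
  have : phiF b T.1 T.2 ω = 0 := by linarith
  rw [← hphi, this]
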